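/- Let X ⊆ A^ℤ be a shift and u, v ∈ A⁺. Then [u] ⊆ [v] (inclusion of two-sided contexts in L(X)) if and only if for every left-infinite sequence x ∈ A^{ℤ⁻}, C_X(xu) ⊆ C_X(xv), where C_X(x) = {y ∈ A^ℕ : x.y ∈ X}. -/

import Mathlib

/-- The language of finite blocks of a subset `X ⊆ A^ℤ`. -/
def langOf {A : Type*} (X : Set (ℤ → A)) : Set (List A) :=
  {u | u ≠ [] ∧ ∃ z ∈ X, ∃ i : ℤ, u = (List.range u.length).map fun k => z (i + (k : ℤ))}

/-- The bi-infinite sequence `x.y` obtained from a left-infinite sequence `x`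
(indexed so that `x n` is the symbol at position `-(n+1)`) and a right-infinite
sequence `y`. -/
def combine {A : Type*} (x y : ℕ → A) : ℤ → A := fun i =>
  if 0 ≤ i then y i.toNat else x (-i - 1).toNat

/-- The left-infinite sequence `xu` obtained by appending the word `u` on the
right of the left-infinite sequence `x`. -/
def leftAppend {A : Type*} (x : ℕ → A) (u : List A) : ℕ → A := fun n =>
  if h : n < u.length then u.get ⟨u.length - 1 - n, by omega⟩ else x (n - u.length)

/-- `C_X(x) = { y ∈ A^ℕ : x.y ∈ X }`. -/
def followerSet {A : Type*} (X : Set (ℤ → A)) (x : ℕ → A) : Set (ℕ → A) :=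
  {y | combine x y ∈ X}

lemma clean_map {A : Type*} (z : ℤ → A) (n : ℕ) (i : ℤ) :
    ((List.range n).map fun k => z (i + (k : ℤ)))
      = (List.range n).map (fun k : ℕ => z (i + (k : ℤ))) := by
  rw [show ((List.range n).map fun k => z (i + (k : ℤ)))
      = List.map (fun k : ℤ => z (i + k))
          ((List.range n).flatMap (pure ∘ (fun a : ℕ => (a : ℤ)))) from rfl]
  rw [List.flatMap_pure_eq_map, List.map_map]
  rfl

lemma appear_iff {A : Type*} (z : ℤ → A) (w : List A) (i : ℤ) :
    (w = (List.range w.length).map fun k => z (i + (k : ℤ))) ↔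
      ∀ k : ℕ, (h : k < w.length) → w[k] = z (i + k) := by
  rw [clean_map]
  constructor
  · intro e k h
    rw [List.getElem_of_eq e, List.getElem_map, List.getElem_range]
  · intro h
    apply List.ext_getElem
    · simp
    · intro k h1 h2
      simp only [List.getElem_map, List.getElem_range]
      exact h k h1

lemma mem_langOf_iff {A : Type*} (X : Set (ℤ → A)) (w : List A) :
    w ∈ langOf X ↔ w ≠ [] ∧ ∃ z ∈ X, ∃ i : ℤ,
      ∀ k : ℕ, (h : k < w.length) → w[k] = z (i + k) := by
  unfold langOf
  simp only [Set.mem_setOf_eq, appear_iff]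

lemma shiftMem {A : Type*} {X : Set (ℤ → A)}
    (hshift : ∀ z : ℤ → A, z ∈ X ↔ (fun i => z (i + 1)) ∈ X)
    (z : ℤ → A) (t : ℤ) (hz : z ∈ X) : (fun i => z (i + t)) ∈ X := by
  induction t using Int.induction_on with
  | zero => simpa using hz
  | succ n ih =>
      have h1 := (hshift _).mp ih
      have : (fun i : ℤ => z (i + 1 + (n : ℤ))) = fun i : ℤ => z (i + ((n : ℤ) + 1)) := by
        funext i; ring_nf
      rw [this] at h1
      exact h1
  | pred n ih =>
      have h1 : (fun i : ℤ => z (i + 1 + (-(n : ℤ) - 1))) ∈ X := by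
        have : (fun i : ℤ => z (i + 1 + (-(n : ℤ) - 1))) = fun i : ℤ => z (i + -(n : ℤ)) := by
          funext i; ring_nf
        rw [this]; exact ih
      exact (hshift (fun i => z (i + (-(n : ℤ) - 1)))).mpr h1

lemma combine_nonneg {A : Type*} (x y : ℕ → A) (j : ℤ) (h : 0 ≤ j) :
    combine x y j = y j.toNat := if_pos h

lemma combine_neg {A : Type*} (x y : ℕ → A) (j : ℤ) (h : j < 0) :
    combine x y j = x (-j - 1).toNat := if_neg (by omega)

lemma leftAppend_lt {A : Type*} (x : ℕ → A) (w : List A) (n : ℕ) (h : n < w.length) :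
    leftAppend x w n = w[w.length - 1 - n]'(by omega) := dif_pos h

lemma leftAppend_ge {A : Type*} (x : ℕ → A) (w : List A) (n : ℕ) (h : w.length ≤ n) :
    leftAppend x w n = x (n - w.length) := dif_neg (by omega)

/-- For a shift `X ⊆ A^ℤ` over a finite alphabet and words `u, v`:
`[u] ⊆ [v]` (inclusion of two-sided contexts) iff `C_X(xu) ⊆ C_X(xv)` for
every left-infinite `x`. -/
theorem stmt10 {A : Type*} [Fintype A] (X : Set (ℤ → A)) (hne : X.Nonempty)
    (hshift : ∀ z : ℤ → A, z ∈ X ↔ (fun i => z (i + 1)) ∈ X)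
    (hclosed : ∀ z : ℤ → A,
      (∀ n : ℕ, ∃ z' ∈ X, ∀ i : ℤ, |i| ≤ (n : ℤ) → z' i = z i) → z ∈ X)
    (u v : List A) (hu : u ≠ []) (hv : v ≠ []) :
    (∀ p q : List A, p ++ u ++ q ∈ langOf X → p ++ v ++ q ∈ langOf X) ↔
      ∀ x : ℕ → A, followerSet X (leftAppend x u) ⊆ followerSet X (leftAppend x v) := by
  constructor
  · -- context inclusion → follower inclusion
    intro h x y hy
    have hy' : combine (leftAppend x u) y ∈ X := hy
    refine hclosed _ (fun n => ?_)
    set p : List A := (List.range n).map (fun k => x (n - 1 - k)) with hp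
    set q : List A := (List.range (n + 1)).map y with hq
    have hplen : p.length = n := by simp [hp]
    have hqlen : q.length = n + 1 := by simp [hq]
    have h1 : p ++ u ++ q ∈ langOf X := by
      rw [mem_langOf_iff]
      refine ⟨by simp [hu], combine (leftAppend x u) y, hy',
        -((n : ℤ) + u.length), ?_⟩
      intro k hk
      have hk' : k < n + u.length + (n + 1) := by
        simp only [List.length_append, hplen, hqlen] at hk; omega
      rcases lt_or_ge k n with hkn | hkn
      · -- in p
        rw [List.getElem_append_left (by simp [hplen]; omega),
            List.getElem_append_left (by omega)]
        have hj : -((n : ℤ) + u.length) + k < 0 := by omega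
        rw [combine_neg _ _ _ hj]
        have hm : (-(-((n : ℤ) + u.length) + k) - 1).toNat = n + u.length - k - 1 := by omega
        rw [hm, leftAppend_ge _ _ _ (by omega)]
        simp only [hp, List.getElem_map, List.getElem_range]
        congr 1
        omega
      · rcases lt_or_ge k (n + u.length) with hku | hku
        · -- in u
          rw [List.getElem_append_left (by simp [hplen]; omega),
              List.getElem_append_right (by omega)]
          have hj : -((n : ℤ) + u.length) + k < 0 := by omega
          rw [combine_neg _ _ _ hj]
          have hm : (-(-((n : ℤ) + u.length) + k) - 1).toNat = n + u.length - k - 1 := by omega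
          rw [hm, leftAppend_lt _ _ _ (by omega)]
          congr 1
          omega
        · -- in q
          rw [List.getElem_append_right (by simp [hplen]; omega)]
          have hj : (0 : ℤ) ≤ -((n : ℤ) + u.length) + k := by omega
          rw [combine_nonneg _ _ _ hj]
          simp only [hq, List.getElem_map, List.getElem_range]
          congr 1
          simp [hplen]
          omega
    obtain ⟨-, z₀, hz₀, i, hi⟩ := (mem_langOf_iff X _).mp (h p q h1)
    have hlen2 : (p ++ v ++ q).length = n + v.length + (n + 1) := by
      simp only [List.length_append, hplen, hqlen]
    refine ⟨fun j => z₀ (j + (i + n + v.length)), shiftMem hshift z₀ _ hz₀, ?_⟩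
    intro j hj
    rw [abs_le] at hj
    obtain ⟨hj1, hj2⟩ := hj
    rcases le_or_gt 0 j with hj0 | hj0
    · -- j ≥ 0, value from q
      rw [combine_nonneg _ _ _ hj0]
      have hkb : n + v.length + j.toNat < (p ++ v ++ q).length := by rw [hlen2]; omega
      have := hi (n + v.length + j.toNat) hkb
      rw [List.getElem_append_right (by
        simp only [List.length_append, hplen]; omega)] at this
      simp only [hq, List.getElem_map, List.getElem_range] at this
      rw [show n + v.length + j.toNat - (p ++ v).length = j.toNat from by
        simp only [List.length_append, hplen]; omega] at this
      show z₀ (j + (i + ↑n + ↑v.length)) = y j.toNat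
      rw [show j + (i + (n : ℤ) + v.length) = i + ((n + v.length + j.toNat : ℕ) : ℤ) from by
        push_cast; omega, ← this]
    · -- j < 0
      rw [combine_neg _ _ _ (by omega)]
      obtain ⟨m, hm⟩ : ∃ m : ℕ, (-j - 1).toNat = m := ⟨_, rfl⟩
      rw [hm]
      have hmj : (m : ℤ) = -j - 1 := by omega
      rcases lt_or_ge m v.length with hmv | hmv
      · -- inside v
        rw [leftAppend_lt _ _ _ hmv]
        have hkb : n + (v.length - 1 - m) < (p ++ v ++ q).length := by rw [hlen2]; omega
        have := hi (n + (v.length - 1 - m)) hkb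
        rw [List.getElem_append_left (by simp [hplen]; omega),
            List.getElem_append_right (by omega)] at this
        rw [show v[n + (v.length - 1 - m) - p.length]'(by omega)
              = v[v.length - 1 - m]'(by omega) from by congr 1; omega] at this
        rw [this]
        show z₀ (j + (i + (n : ℤ) + v.length)) = z₀ (i + ((n + (v.length - 1 - m) : ℕ) : ℤ))
        congr 1
        omega
      · -- inside x
        rw [leftAppend_ge _ _ _ hmv]
        have hkb : n - 1 - m + v.length < (p ++ v ++ q).length := by rw [hlen2]; omega
        have := hi (n - 1 - m + v.length) hkb
        have hkn : n - 1 - m + v.length < n := by omega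
        rw [List.getElem_append_left (by simp [hplen]; omega),
            List.getElem_append_left (by omega)] at this
        simp only [hp, List.getElem_map, List.getElem_range] at this
        rw [show x (n - 1 - (n - 1 - m + v.length)) = x (m - v.length) from by
          congr 1; omega] at this
        rw [this]
        show z₀ (j + (i + (n : ℤ) + v.length)) = z₀ (i + ((n - 1 - m + v.length : ℕ) : ℤ))
        congr 1
        omega
  · -- follower inclusion → context inclusion
    intro h p q hpq
    rw [mem_langOf_iff] at hpq ⊢
    obtain ⟨-, z, hz, i, hi⟩ := hpq
    set t : ℤ := i + p.length + u.length with ht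
    set x : ℕ → A := fun n => z (t - u.length - 1 - n) with hx
    set y : ℕ → A := fun n => z (t + n) with hyy
    have hlen : (p ++ u ++ q).length = p.length + u.length + q.length := by
      rw [List.length_append, List.length_append]
    have hzy : combine (leftAppend x u) y = fun j => z (j + t) := by
      funext j
      rcases le_or_gt 0 j with hj0 | hj0
      · rw [combine_nonneg _ _ _ hj0]
        simp only [hyy]
        congr 1
        omega
      · rw [combine_neg _ _ _ hj0]
        obtain ⟨m, hm⟩ : ∃ m : ℕ, (-j - 1).toNat = m := ⟨_, rfl⟩
        rw [hm]
        have hmj : (m : ℤ) = -j - 1 := by omega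
        rcases lt_or_ge m u.length with hmu | hmu
        · rw [leftAppend_lt _ _ _ hmu]
          have hkb : p.length + (u.length - 1 - m) < (p ++ u ++ q).length := by
            rw [hlen]; omega
          have := hi (p.length + (u.length - 1 - m)) hkb
          rw [List.getElem_append_left (by simp; omega),
              List.getElem_append_right (by omega)] at this
          rw [show u[p.length + (u.length - 1 - m) - p.length]'(by omega)
                = u[u.length - 1 - m]'(by omega) from by congr 1; omega] at this
          rw [this]
          congr 1
          push_cast
          omega
        · rw [leftAppend_ge _ _ _ hmu]
          simp only [hx]
          congr 1
          push_cast
          omega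
    have h2 : combine (leftAppend x u) y ∈ X := by
      rw [hzy]; exact shiftMem hshift z t hz
    have h3 : combine (leftAppend x v) y ∈ X := h x h2
    have hne2 : p ++ v ++ q ≠ [] := by simp [hv]
    refine ⟨hne2, combine (leftAppend x v) y, h3, -((p.length : ℤ) + v.length), ?_⟩
    intro k hk
    have hk' : k < p.length + v.length + q.length := by
      simp only [List.length_append] at hk; omega
    rcases lt_or_ge k p.length with hkp | hkp
    · -- p part
      rw [List.getElem_append_left (by simp; omega), List.getElem_append_left (by omega)]
      have hj : -((p.length : ℤ) + v.length) + k < 0 := by omega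
      rw [combine_neg _ _ _ hj]
      have hm : (-(-((p.length : ℤ) + v.length) + k) - 1).toNat
          = p.length + v.length - k - 1 := by omega
      rw [hm, leftAppend_ge _ _ _ (by omega)]
      simp only [hx]
      have hkb : k < (p ++ u ++ q).length := by rw [hlen]; omega
      have := hi k hkb
      rw [List.getElem_append_left (by simp; omega), List.getElem_append_left (by omega)]
        at this
      rw [this]
      congr 1
      push_cast
      omega
    · rcases lt_or_ge k (p.length + v.length) with hkv | hkv
      · -- v part
        rw [List.getElem_append_left (by simp; omega),
            List.getElem_append_right (by omega)]
        have hj : -((p.length : ℤ) + v.length) + k < 0 := by omega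
        rw [combine_neg _ _ _ hj]
        have hm : (-(-((p.length : ℤ) + v.length) + k) - 1).toNat
            = p.length + v.length - k - 1 := by omega
        rw [hm, leftAppend_lt _ _ _ (by omega)]
        congr 1
        omega
      · -- q part
        rw [List.getElem_append_right (by simp; omega)]
        have hj : (0 : ℤ) ≤ -((p.length : ℤ) + v.length) + k := by omega
        rw [combine_nonneg _ _ _ hj]
        simp only [hyy]
        have hkb : k - v.length + u.length < (p ++ u ++ q).length := by rw [hlen]; omega
        have := hi (k - v.length + u.length) hkb
        rw [List.getElem_append_right (by simp; omega)] at this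
        rw [show q[k - v.length + u.length - (p ++ u).length]'(by simp; omega)
              = q[k - (p ++ v).length]'(by simp; omega) from by congr 1; simp; omega] at this
        rw [this]
        congr 1
        push_cast
        omega
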